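/- Let B_1,...,B_I, D be mutually independent random variables, B_l ~ Exp(μ_l), D ~ Exp(ν). For c > 0, the function g(c) := λ E[min{c(B_1 + ... + B_I), D}] − c is strictly monotone in the sense that g(c)/c is strictly decreasing, and under the overload assumption λ Σ 1/μ_i > 1, the equation c = λ E[min{c(B_1+...+B_I), D}] has a unique positive solution. -/

import Mathlib

open MeasureTheory ProbabilityTheory Set


open MeasureTheory ProbabilityTheory Set Real Filter Topology
open scoped ENNReal NNReal

lemma myExpPDFReal_eq (r x : ℝ) :
    exponentialPDFReal r x = if 0 ≤ x then r * Real.exp (-(r * x)) else 0 := by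
  rw [exponentialPDFReal, gammaPDFReal]
  simp only [rpow_one, Real.Gamma_one, div_one, sub_self, rpow_zero, mul_one]

lemma myExpMeasure_eq (r : ℝ) :
    expMeasure r = volume.withDensity (exponentialPDF r) := rfl

lemma myExpPDF_coe (r x : ℝ) :
    exponentialPDF r x = ((exponentialPDFReal r x).toNNReal : ℝ≥0∞) := rfl

lemma myExpAux_indicator (r : ℝ) :
    (fun x => exponentialPDFReal r x * x)
      = Set.indicator (Set.Ici (0:ℝ)) (fun x => r * Real.exp (-(r * x)) * x) := by
  funext x
  by_cases h : (0:ℝ) ≤ x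
  · rw [Set.indicator_of_mem (mem_Ici.2 h), myExpPDFReal_eq, if_pos h]
  · rw [Set.indicator_of_notMem (by simpa using h), myExpPDFReal_eq, if_neg h, zero_mul]

lemma myExpAux_integrable {r : ℝ} (hr : 0 < r) :
    Integrable (fun x => exponentialPDFReal r x * x) := by
  rw [myExpAux_indicator r, integrable_indicator_iff measurableSet_Ici]
  rw [integrableOn_Ici_iff_integrableOn_Ioi]
  have base := integrableOn_rpow_mul_exp_neg_mul_rpow (s := (1:ℝ)) (p := (1:ℝ)) (b := r)
    (by norm_num) (by norm_num) hr
  have : Set.EqOn (fun x => r * Real.exp (-(r * x)) * x)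
      (fun x => r * (x ^ (1:ℝ) * Real.exp (-r * x ^ (1:ℝ)))) (Set.Ioi 0) := by
    intro x _; simp only [rpow_one, neg_mul]; ring
  exact (IntegrableOn.congr_fun (base.const_mul r) this.symm measurableSet_Ioi)

lemma myExpAux_integral {r : ℝ} (hr : 0 < r) :
    ∫ x, exponentialPDFReal r x * x = 1 / r := by
  rw [myExpAux_indicator r, integral_indicator measurableSet_Ici,
    integral_Ici_eq_integral_Ioi]
  have hcong : ∫ x in Set.Ioi (0:ℝ), r * Real.exp (-(r * x)) * x
      = ∫ x in Set.Ioi (0:ℝ), r * (x ^ (1:ℝ) * Real.exp (-r * x ^ (1:ℝ))) := by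
    refine setIntegral_congr_fun measurableSet_Ioi fun x _ => ?_
    simp only [rpow_one, neg_mul]; ring
  rw [hcong, integral_const_mul, integral_rpow_mul_exp_neg_mul_rpow (by norm_num) (by norm_num) hr]
  have h2 : ((-(1 + 1) / 1 : ℝ)) = ((-2 : ℤ) : ℝ) := by norm_num
  have hG : Real.Gamma ((1 + 1) / 1) = 1 := by
    norm_num
  rw [h2, Real.rpow_intCast, hG]
  field_simp

lemma myExpMeasure_Iic_zero {r : ℝ} (hr : 0 < r) : expMeasure r (Set.Iic 0) = 0 := by
  rw [myExpMeasure_eq, withDensity_apply _ measurableSet_Iic,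
    lintegral_exponentialPDF_eq_antiDeriv hr 0]
  simp

lemma myExpMeasure_Iic_pos {r a : ℝ} (hr : 0 < r) (ha : 0 < a) :
    0 < expMeasure r (Set.Iic a) := by
  rw [myExpMeasure_eq, withDensity_apply _ measurableSet_Iic,
    lintegral_exponentialPDF_eq_antiDeriv hr a, if_pos ha.le]
  refine ENNReal.ofReal_pos.2 ?_
  have : Real.exp (-(r * a)) < 1 := Real.exp_lt_one_iff.2 (by nlinarith)
  linarith

lemma myIntegrable_id_exp {r : ℝ} (hr : 0 < r) : Integrable id (expMeasure r) := by
  rw [myExpMeasure_eq]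
  have hmeas : Measurable fun x => (exponentialPDFReal r x).toNNReal :=
    (measurable_exponentialPDFReal r).real_toNNReal
  rw [show (exponentialPDF r) = (fun x => ((exponentialPDFReal r x).toNNReal : ℝ≥0∞)) from rfl]
  rw [integrable_withDensity_iff_integrable_smul hmeas]
  refine (myExpAux_integrable hr).congr ?_
  refine ae_of_all _ fun x => ?_
  simp [NNReal.smul_def, Real.coe_toNNReal _ (exponentialPDFReal_nonneg hr x)]

lemma myIntegral_id_exp {r : ℝ} (hr : 0 < r) : ∫ x, x ∂(expMeasure r) = 1 / r := by
  rw [myExpMeasure_eq]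
  have hmeas : Measurable fun x => (exponentialPDFReal r x).toNNReal :=
    (measurable_exponentialPDFReal r).real_toNNReal
  rw [show (exponentialPDF r) = (fun x => ((exponentialPDFReal r x).toNNReal : ℝ≥0∞)) from rfl]
  rw [integral_withDensity_eq_integral_smul hmeas]
  rw [← myExpAux_integral hr]
  refine integral_congr_ae (ae_of_all _ fun x => ?_)
  simp [NNReal.smul_def, Real.coe_toNNReal _ (exponentialPDFReal_nonneg hr x)]


/-- with `B_l ~ Exp(μ_l)`, `D ~ Exp(ν)` mutually independent and
`S = B_1 + ... + B_I`, the function `g(c) = λ E[min(cS, D)] − c` has `g(c)/c` strictly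
decreasing on `(0,∞)`, and under overload `λ ∑ 1/μ_i > 1` the equation
`c = λ E[min(cS, D)]` has a unique positive solution. -/
theorem fixed_point_norm_unique
    {Ω : Type*} [MeasurableSpace Ω] (P : Measure Ω) [IsProbabilityMeasure P]
    (n : ℕ) (lam ν : ℝ) (hlam : 0 < lam) (hν : 0 < ν)
    (μ : Fin (n + 1) → ℝ) (hμ : ∀ i, 0 < μ i)
    (hover : 1 < lam * ∑ i, 1 / μ i)
    (B : Fin (n + 1) → Ω → ℝ) (D : Ω → ℝ)
    (hmB : ∀ l, Measurable (B l)) (hmD : Measurable D)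
    (hindep : iIndepFun
      (Fin.cons D B : Fin (n + 2) → Ω → ℝ) P)
    (hB : ∀ l, Measure.map (B l) P = expMeasure (μ l))
    (hD : Measure.map D P = expMeasure ν) :
    StrictAntiOn
      (fun c : ℝ => (lam * (∫ ω, min (c * ∑ l, B l ω) (D ω) ∂P) - c) / c)
      (Set.Ioi 0) ∧
    ∃! c : ℝ, 0 < c ∧ c = lam * ∫ ω, min (c * ∑ l, B l ω) (D ω) ∂P := by
    classical
  set S : Ω → ℝ := fun ω => ∑ l, B l ω with hSdef
  set I : ℝ → ℝ := fun c => ∫ ω, min (c * S ω) (D ω) ∂P with hIdef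
  have hmS : Measurable S := Finset.measurable_sum Finset.univ fun i _ => hmB i
  -- a.e. positivity
  have hBpos : ∀ l, ∀ᵐ ω ∂P, 0 < B l ω := by
    intro l
    have h0 : P (B l ⁻¹' Set.Iic 0) = 0 := by
      rw [← Measure.map_apply (hmB l) measurableSet_Iic, hB l]
      exact myExpMeasure_Iic_zero (hμ l)
    rw [ae_iff]
    convert h0 using 2
    ext ω; simp [not_lt]
  have hDpos : ∀ᵐ ω ∂P, 0 < D ω := by
    have h0 : P (D ⁻¹' Set.Iic 0) = 0 := by
      rw [← Measure.map_apply hmD measurableSet_Iic, hD]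
      exact myExpMeasure_Iic_zero hν
    rw [ae_iff]
    convert h0 using 2
    ext ω; simp [not_lt]
  have hSpos : ∀ᵐ ω ∂P, 0 < S ω := by
    filter_upwards [ae_all_iff.2 hBpos] with ω h
    exact Finset.sum_pos (fun i _ => h i) ⟨0, Finset.mem_univ _⟩
  -- integrability and means
  have hBint : ∀ l, Integrable (B l) P := by
    intro l
    have h : Integrable id (P.map (B l)) := by
      rw [hB l]; exact myIntegrable_id_exp (hμ l)
    rw [integrable_map_measure aestronglyMeasurable_id (hmB l).aemeasurable] at h
    simpa using h
  have hDint : Integrable D P := by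
    have h : Integrable id (P.map D) := by
      rw [hD]; exact myIntegrable_id_exp hν
    rw [integrable_map_measure aestronglyMeasurable_id hmD.aemeasurable] at h
    simpa using h
  have hSint : Integrable S P := integrable_finset_sum _ fun i _ => hBint i
  have hBmean : ∀ l, ∫ ω, B l ω ∂P = 1 / μ l := by
    intro l
    have h : ∫ x, x ∂(P.map (B l)) = 1 / μ l := by
      rw [hB l]; exact myIntegral_id_exp (hμ l)
    have h2 : ∫ x, x ∂(P.map (B l)) = ∫ ω, B l ω ∂P :=
      integral_map (hmB l).aemeasurable aestronglyMeasurable_id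
    rw [h2] at h; exact h
  have hDmean : ∫ ω, D ω ∂P = 1 / ν := by
    have h : ∫ x, x ∂(P.map D) = 1 / ν := by
      rw [hD]; exact myIntegral_id_exp hν
    have h2 : ∫ x, x ∂(P.map D) = ∫ ω, D ω ∂P :=
      integral_map hmD.aemeasurable aestronglyMeasurable_id
    rw [h2] at h; exact h
  have hSmean : ∫ ω, S ω ∂P = ∑ l, 1 / μ l := by
    rw [hSdef]
    rw [integral_finset_sum _ fun i _ => hBint i]
    exact Finset.sum_congr rfl fun i _ => hBmean i
  -- integrability of min
  have hmin_meas : ∀ c : ℝ, AEStronglyMeasurable (fun ω => min (c * S ω) (D ω)) P :=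
    fun c => ((measurable_const.mul hmS).min hmD).aestronglyMeasurable
  have hminint : ∀ c : ℝ, 0 < c → Integrable (fun ω => min (c * S ω) (D ω)) P := by
    intro c hc
    refine hDint.mono' (hmin_meas c) ?_
    filter_upwards [hSpos, hDpos] with ω h1 h2
    rw [Real.norm_eq_abs, abs_of_nonneg (le_min (by positivity) h2.le)]
    exact min_le_right _ _
  -- independence of S and D
  have hmCons : ∀ i, Measurable ((Fin.cons D B : Fin (n + 2) → Ω → ℝ) i) := by
    intro i
    refine Fin.cases ?_ ?_ i
    · simpa using hmD
    · intro j; simpa using hmB j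
  have hindepSD : IndepFun S D P := by
    have h := hindep.indepFun_finset_sum_of_notMem hmCons
      (s := Finset.univ.image Fin.succ) (i := (0 : Fin (n + 2)))
      (by simp [Finset.mem_image, (Fin.succ_ne_zero _).symm, fun a => Fin.succ_ne_zero a])
    have hsum : (∑ j ∈ Finset.univ.image Fin.succ,
        (Fin.cons D B : Fin (n + 2) → Ω → ℝ) j) = S := by
      rw [Finset.sum_image (by intro x _ y _ hxy; exact Fin.succ_injective _ hxy)]
      funext ω
      rw [hSdef]
      simp [Finset.sum_apply, Fin.cons_succ]
    rwa [hsum, Fin.cons_zero] at h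
  have hDsmall : ∀ a : ℝ, 0 < a → P (D ⁻¹' Set.Iic a) ≠ 0 := by
    intro a ha
    rw [← Measure.map_apply hmD measurableSet_Iic, hD]
    exact (myExpMeasure_Iic_pos hν ha).ne'
  obtain ⟨s₀, hs₀pos, hs₀⟩ : ∃ s₀ : ℝ, 0 < s₀ ∧ P (S ⁻¹' Set.Ioi s₀) ≠ 0 := by
    by_contra hcon
    push_neg at hcon
    have hnull : P (⋃ k : ℕ, S ⁻¹' Set.Ioi ((k + 1 : ℝ))⁻¹) = 0 :=
      measure_iUnion_null fun k => hcon _ (by positivity)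
    have hcover : ∀ᵐ ω ∂P, ω ∈ ⋃ k : ℕ, S ⁻¹' Set.Ioi ((k + 1 : ℝ))⁻¹ := by
      filter_upwards [hSpos] with ω h
      obtain ⟨k, hk⟩ := exists_nat_one_div_lt h
      exact Set.mem_iUnion.2 ⟨k, by simpa [one_div] using hk⟩
    have hcompl : P {ω | ω ∉ ⋃ k : ℕ, S ⁻¹' Set.Ioi ((k + 1 : ℝ))⁻¹} = 0 := ae_iff.mp hcover
    have hle : P Set.univ ≤ P ({ω | ω ∉ ⋃ k : ℕ, S ⁻¹' Set.Ioi ((k + 1 : ℝ))⁻¹}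
        ∪ ⋃ k : ℕ, S ⁻¹' Set.Ioi ((k + 1 : ℝ))⁻¹) := by
      refine measure_mono fun ω _ => ?_
      by_cases h : ω ∈ ⋃ k : ℕ, S ⁻¹' Set.Ioi ((k + 1 : ℝ))⁻¹
      · exact Or.inr h
      · exact Or.inl h
    have := hle.trans ((measure_union_le _ _).trans (by rw [hcompl, hnull, zero_add]))
    simp at this
  -- strict comparison
  have key : ∀ c1 c2 : ℝ, 0 < c1 → c1 < c2 → c1 * I c2 < c2 * I c1 := by
    intro c1 c2 hc1 h12
    have hc2 : 0 < c2 := hc1.trans h12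
    set G1 : Ω → ℝ := fun ω => c1 * min (c2 * S ω) (D ω) with hG1
    set G2 : Ω → ℝ := fun ω => c2 * min (c1 * S ω) (D ω) with hG2
    have hG1int : Integrable G1 P := (hminint c2 hc2).const_mul c1
    have hG2int : Integrable G2 P := (hminint c1 hc1).const_mul c2
    have hle : ∀ᵐ ω ∂P, G1 ω ≤ G2 ω := by
      filter_upwards [hSpos, hDpos] with ω h1 h2
      have e1 : G1 ω = min (c1 * (c2 * S ω)) (c1 * D ω) :=
        (monotone_mul_left_of_nonneg hc1.le).map_min
      have e2 : G2 ω = min (c2 * (c1 * S ω)) (c2 * D ω) :=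
        (monotone_mul_left_of_nonneg hc2.le).map_min
      rw [e1, e2, show c2 * (c1 * S ω) = c1 * (c2 * S ω) by ring]
      exact min_le_min le_rfl (mul_le_mul_of_nonneg_right h12.le h2.le)
    have hstrict : ∀ ω, ω ∈ S ⁻¹' Set.Ioi s₀ ∩ D ⁻¹' Set.Iic (c2 * s₀) → 0 < D ω →
        G1 ω < G2 ω := by
      rintro ω ⟨hωS, hωD⟩ hDω
      have hωS' : s₀ < S ω := hωS
      have hωD' : D ω ≤ c2 * s₀ := hωD
      have e1 : G1 ω = min (c1 * (c2 * S ω)) (c1 * D ω) :=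
        (monotone_mul_left_of_nonneg hc1.le).map_min
      have e2 : G2 ω = min (c2 * (c1 * S ω)) (c2 * D ω) :=
        (monotone_mul_left_of_nonneg hc2.le).map_min
      rw [e1, e2, show c2 * (c1 * S ω) = c1 * (c2 * S ω) by ring]
      have hx : c2 * s₀ < c2 * S ω := mul_lt_mul_of_pos_left hωS' hc2
      have hd : c1 * D ω < c1 * (c2 * S ω) :=
        mul_lt_mul_of_pos_left (lt_of_le_of_lt hωD' hx) hc1
      have hd2 : c1 * D ω < c2 * D ω := mul_lt_mul_of_pos_right h12 hDω
      calc min (c1 * (c2 * S ω)) (c1 * D ω) ≤ c1 * D ω := min_le_right _ _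
        _ < min (c1 * (c2 * S ω)) (c2 * D ω) := lt_min hd hd2
    have hApos : P (S ⁻¹' Set.Ioi s₀ ∩ D ⁻¹' Set.Iic (c2 * s₀)) ≠ 0 := by
      rw [hindepSD.measure_inter_preimage_eq_mul _ _ measurableSet_Ioi measurableSet_Iic]
      exact mul_ne_zero hs₀ (hDsmall _ (by positivity))
    have hne : ¬ (G1 =ᵐ[P] G2) := by
      intro heq
      have h0 : P {ω | ¬ G1 ω = G2 ω} = 0 := ae_iff.mp heq
      have hDn : P {ω | ¬ 0 < D ω} = 0 := ae_iff.mp hDpos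
      refine hApos ?_
      refine le_antisymm ?_ zero_le
      calc P (S ⁻¹' Set.Ioi s₀ ∩ D ⁻¹' Set.Iic (c2 * s₀))
          ≤ P ({ω | ¬ G1 ω = G2 ω} ∪ {ω | ¬ 0 < D ω}) := by
            refine measure_mono fun ω hω => ?_
            by_cases h : 0 < D ω
            · exact Or.inl (fun habs => absurd habs (ne_of_lt (hstrict ω hω h)))
            · exact Or.inr h
        _ ≤ P {ω | ¬ G1 ω = G2 ω} + P {ω | ¬ 0 < D ω} := measure_union_le _ _
        _ = 0 := by rw [h0, hDn, zero_add]
    have hlt : ∫ ω, G1 ω ∂P < ∫ ω, G2 ω ∂P := by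
      rcases (integral_mono_ae hG1int hG2int hle).lt_or_eq with h | h
      · exact h
      · exfalso
        have hz : ∫ ω, (G2 ω - G1 ω) ∂P = 0 := by
          rw [integral_sub hG2int hG1int, ← h, sub_self]
        have hnn : 0 ≤ᵐ[P] fun ω => G2 ω - G1 ω := by
          filter_upwards [hle] with ω h'
          simp only [Pi.zero_apply]; linarith
        have := (integral_eq_zero_iff_of_nonneg_ae hnn (hG2int.sub hG1int)).mp hz
        refine hne ?_
        filter_upwards [this] with ω h'
        have h'' : G2 ω - G1 ω = 0 := h'
        linarith
    calc c1 * I c2 = ∫ ω, G1 ω ∂P := (integral_const_mul c1 _).symm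
      _ < ∫ ω, G2 ω ∂P := hlt
      _ = c2 * I c1 := integral_const_mul c2 _
  -- strict antitonicity
  have hanti : StrictAntiOn (fun c : ℝ => (lam * I c - c) / c) (Set.Ioi 0) := by
    intro c1 hc1 c2 hc2 h12
    simp only [Set.mem_Ioi] at hc1 hc2
    have hkey := key c1 c2 hc1 h12
    have hkey' := mul_lt_mul_of_pos_left hkey hlam
    rw [div_lt_div_iff₀ hc2 hc1]
    nlinarith [hkey']
  -- upper bound point
  have hIle : ∀ c : ℝ, 0 < c → I c ≤ 1 / ν := by
    intro c hc
    rw [← hDmean]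
    exact integral_mono_ae (hminint c hc) hDint (ae_of_all _ fun ω => min_le_right _ _)
  -- small point with value above
  have hmean_gt : 1 / lam < ∫ ω, S ω ∂P := by
    rw [hSmean, div_lt_iff₀ hlam]
    linarith [hover]
  have hsmall : ∃ a : ℝ, 0 < a ∧ a < lam * I a := by
    have htend : Tendsto (fun k : ℕ => ∫ ω, min (S ω) ((k + 1 : ℝ) * D ω) ∂P) atTop
        (𝓝 (∫ ω, S ω ∂P)) := by
      refine tendsto_integral_of_dominated_convergence (fun ω => |S ω|) ?_ hSint.abs ?_ ?_
      · exact fun k => (hmS.min (measurable_const.mul hmD)).aestronglyMeasurable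
      · intro k
        filter_upwards [hSpos, hDpos] with ω h1 h2
        rw [Real.norm_eq_abs, abs_of_nonneg (le_min h1.le (by positivity))]
        exact (min_le_left _ _).trans (le_abs_self _)
      · filter_upwards [hSpos, hDpos] with ω h1 h2
        refine tendsto_atTop_of_eventually_const (i₀ := Nat.ceil (S ω / D ω)) ?_
        intro k hk
        refine min_eq_left ?_
        have h3 : S ω / D ω ≤ (k : ℝ) := (Nat.le_ceil _).trans (by exact_mod_cast hk)
        rw [div_le_iff₀ h2] at h3
        nlinarith
    obtain ⟨k, hk⟩ := (htend.eventually (eventually_gt_nhds hmean_gt)).exists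
    set K : ℝ := (k : ℝ) + 1 with hK
    have hKpos : (0:ℝ) < K := by positivity
    refine ⟨K⁻¹, by positivity, ?_⟩
    have hrel : ∫ ω, min (S ω) (K * D ω) ∂P = K * I K⁻¹ := by
      rw [hIdef]
      simp only
      rw [← integral_const_mul]
      refine integral_congr_ae (ae_of_all _ fun ω => ?_)
      have hmm : ∀ x y : ℝ, K * min x y = min (K * x) (K * y) := fun x y =>
        (monotone_mul_left_of_nonneg hKpos.le).map_min
      show S ω ⊓ K * D ω = K * (K⁻¹ * S ω ⊓ D ω)
      rw [hmm]
      congr 1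
      field_simp
    rw [hrel] at hk
    have h1 : 1 < K * I K⁻¹ * lam := (div_lt_iff₀ hlam).mp hk
    have h2 : 1 / K < lam * I K⁻¹ :=
      (div_lt_iff₀ hKpos).mpr (by nlinarith [h1])
    simpa [one_div] using h2
  -- continuity of I at positive points
  have hcont : ∀ c : ℝ, 0 < c → ContinuousAt I c := by
    intro c₀ hc₀
    rw [hIdef]
    refine continuousAt_of_dominated ?_ ?_ hDint.abs ?_
    · exact Eventually.of_forall fun c => hmin_meas c
    · filter_upwards [eventually_gt_nhds hc₀] with c hc
      filter_upwards [hSpos, hDpos] with ω h1 h2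
      rw [Real.norm_eq_abs, abs_of_nonneg (le_min (mul_nonneg hc.le h1.le) h2.le)]
      exact (min_le_right _ _).trans (le_abs_self _)
    · refine ae_of_all _ fun ω => ?_
      exact ((continuous_id.mul continuous_const).min continuous_const).continuousAt
  obtain ⟨a, hapos, haI⟩ := hsmall
  set b : ℝ := max (a + 1) (lam / ν + 1) with hb
  have hab : a < b := lt_of_lt_of_le (by linarith) (le_max_left _ _)
  have hbpos : 0 < b := lt_trans hapos hab
  have hbI : lam * I b < b := by
    have h1 : I b ≤ 1 / ν := hIle b hbpos
    have h2 : lam * I b ≤ lam / ν := by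
      calc lam * I b ≤ lam * (1 / ν) := mul_le_mul_of_nonneg_left h1 hlam.le
        _ = lam / ν := by ring
    calc lam * I b ≤ lam / ν := h2
      _ < lam / ν + 1 := by linarith
      _ ≤ b := le_max_right _ _
  have hcont' : ContinuousOn (fun c : ℝ => lam * I c - c) (Set.Icc a b) := by
    intro c hc
    have h1 : ContinuousAt (fun c : ℝ => lam * I c) c :=
      (hcont c (lt_of_lt_of_le hapos hc.1)).const_mul lam
    have h2 : ContinuousAt (fun c : ℝ => lam * I c - c) c := h1.sub continuousAt_id
    exact h2.continuousWithinAt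
  have hmem : (0 : ℝ) ∈ Set.Icc (lam * I b - b) (lam * I a - a) :=
    ⟨by linarith, by linarith⟩
  obtain ⟨c, hcmem, hc0⟩ := intermediate_value_Icc' hab.le hcont' hmem
  have hcpos : 0 < c := lt_of_lt_of_le hapos hcmem.1
  have hc0' : lam * I c - c = 0 := hc0
  have hceq : c = lam * I c := by linarith
  constructor
  · exact hanti
  · refine ⟨c, ⟨hcpos, hceq⟩, ?_⟩
    rintro c' ⟨hc'pos, hc'eq⟩
    have hc'eq' : c' = lam * I c' := hc'eq
    have e1 : lam * I c' - c' = 0 := by linarith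
    have e2 : lam * I c - c = 0 := hc0'
    have hψ : (fun c : ℝ => (lam * I c - c) / c) c' = (fun c : ℝ => (lam * I c - c) / c) c := by
      simp only [e1, e2, zero_div]
    exact hanti.injOn (Set.mem_Ioi.2 hc'pos) (Set.mem_Ioi.2 hcpos) hψ
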